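/- Let D ⊆ ℝ^N (N ≥ 2) be open, h : D → ℝ continuous, and suppose that for all x in a neighborhood V of x₀ and all admissible radii R the spherical mean of h over ∂B_R(x) vanishes. Then for every polynomial P : ℝ^N → ℝ, the spherical mean ∫_{∂B₁(0)} h(x + Rξ) P(x + Rξ) dσ(ξ) = 0 for all x ∈ V and all R > 0 with B̄_R(x) ⊆ D. -/

import Mathlib

set_option autoImplicit false
set_option maxHeartbeats 1000000

open MeasureTheory Set Metric Function Filter
open scoped NNReal ENNReal

variable {N : ℕ}

local notation "E" => EuclideanSpace ℝ (Fin N)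

lemma integrable_comap_compl_singleton (f : (EuclideanSpace ℝ (Fin N)) → ℝ)
    (hf : Integrable f volume) :
    Integrable (fun x : ({(0:E)}ᶜ : Set E) => f x) (Measure.comap Subtype.val volume) := by
  have hf' : IntegrableOn f ({(0:E)}ᶜ) volume := hf.integrableOn
  rw [IntegrableOn, ← map_comap_subtype_coe (measurableSet_singleton _).compl,
    integrable_map_measure] at hf'
  · exact hf'
  · rw [map_comap_subtype_coe (measurableSet_singleton _).compl]
    exact hf.aestronglyMeasurable.restrict
  · exact measurable_subtype_coe.aemeasurable

lemma polar_integral (hN : 1 ≤ N) (f : (EuclideanSpace ℝ (Fin N)) → ℝ)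
    (hf : Integrable f volume) :
    ∫ y : E, f y = ∫ r in Ioi (0:ℝ), r ^ (N - 1) •
      ∫ ξ : sphere (0:E) 1, f ((r : ℝ) • (ξ : E)) ∂(volume : Measure E).toSphere := by
  have : Nontrivial E := by
    refine ⟨0, EuclideanSpace.single ⟨0, hN⟩ 1, fun h => ?_⟩
    have := congrArg (fun v : E => v ⟨0, hN⟩) h.symm
    simp [EuclideanSpace.single_apply] at this
  have hdim : Module.finrank ℝ (EuclideanSpace ℝ (Fin N)) = N := finrank_euclideanSpace_fin
  have hint : Integrable (fun p : sphere (0:E) 1 × Ioi (0:ℝ) => f ((p.2 : ℝ) • (p.1 : E)))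
      ((volume : Measure E).toSphere.prod (.volumeIoiPow (Module.finrank ℝ E - 1))) := by
    rw [← MeasurePreserving.integrable_comp_emb
      (Measure.measurePreserving_homeomorphUnitSphereProd volume)
      (Homeomorph.measurableEmbedding _)]
    refine (integrable_comap_compl_singleton f hf).congr
      (Eventually.of_forall fun x => ?_)
    simp only [Function.comp_apply, homeomorphUnitSphereProd_apply_snd_coe,
      homeomorphUnitSphereProd_apply_fst_coe]
    rw [smul_inv_smul₀ (norm_ne_zero_iff.2 x.2)]
  have h2 := MeasurePreserving.integral_comp
      (Measure.measurePreserving_homeomorphUnitSphereProd (volume : Measure E))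
      (Homeomorph.measurableEmbedding _)
      (fun p : sphere (0:E) 1 × Ioi (0:ℝ) => f ((p.2 : ℝ) • (p.1 : E)))
  calc ∫ y : E, f y
      = ∫ x : ({(0:E)}ᶜ : Set E), f x ∂(Measure.comap Subtype.val volume) := by
        rw [integral_subtype_comap (measurableSet_singleton _).compl,
          restrict_compl_singleton]
    _ = ∫ p : sphere (0:E) 1 × Ioi (0:ℝ), f ((p.2 : ℝ) • (p.1 : E))
          ∂((volume : Measure E).toSphere.prod (.volumeIoiPow (Module.finrank ℝ E - 1))) := by
        rw [← h2]
        refine integral_congr_ae (Eventually.of_forall fun x => ?_)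
        simp only [homeomorphUnitSphereProd_apply_snd_coe,
          homeomorphUnitSphereProd_apply_fst_coe]
        rw [smul_inv_smul₀ (norm_ne_zero_iff.2 x.2)]
    _ = ∫ r : Ioi (0:ℝ), ∫ ξ : sphere (0:E) 1, f ((r : ℝ) • (ξ : E))
          ∂(volume : Measure E).toSphere ∂(Measure.volumeIoiPow (Module.finrank ℝ E - 1)) :=
        integral_prod_symm _ hint
    _ = ∫ r in Ioi (0:ℝ), r ^ (N - 1) • ∫ ξ : sphere (0:E) 1, f ((r : ℝ) • (ξ : E))
          ∂(volume : Measure E).toSphere := by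
        rw [Measure.volumeIoiPow]
        simp only [ENNReal.ofReal]
        rw [integral_withDensity_eq_integral_smul
          ((measurable_subtype_coe.pow_const _).real_toNNReal),
          integral_subtype_comap measurableSet_Ioi
            (fun a : ℝ => (a ^ (Module.finrank ℝ E - 1)).toNNReal •
              ∫ ξ : sphere (0:E) 1, f (a • (ξ : E)) ∂(volume : Measure E).toSphere),
          hdim]
        refine setIntegral_congr_fun measurableSet_Ioi fun r hr => ?_
        rw [NNReal.smul_def, Real.coe_toNNReal _ (pow_nonneg (le_of_lt hr) _)]

lemma norm_sphere_smul {r : ℝ} (hr : 0 < r) (ξ : sphere (0:E) 1) :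
    ‖r • (ξ : E)‖ = r := by
  rw [norm_smul, mem_sphere_zero_iff_norm.1 ξ.2, Real.norm_eq_abs, abs_of_pos hr, mul_one]

lemma key_step (hN : 1 ≤ N)
    (D : Set (EuclideanSpace ℝ (Fin N))) (hDopen : IsOpen D)
    (V : Set (EuclideanSpace ℝ (Fin N))) (hVopen : IsOpen V) (hVD : V ⊆ D)
    (g : (EuclideanSpace ℝ (Fin N)) → ℝ) (hgcont : ContinuousOn g D)
    (hg : ∀ x ∈ V, ∀ R : ℝ, 0 < R → closedBall x R ⊆ D →
      (∫ ξ : sphere (0:E) 1, g (x + R • (ξ:E)) ∂(volume : Measure E).toSphere) = 0)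
    (i : Fin N) :
    ∀ x ∈ V, ∀ R : ℝ, 0 < R → closedBall x R ⊆ D →
      (∫ ξ : sphere (0:E) 1, g (x + R • (ξ:E)) * ((x + R • (ξ:E)) i)
        ∂(volume : Measure E).toSphere) = 0 := by
  intro x hx R hR hRD
  haveI : CompactSpace (sphere (0:E) 1) :=
    isCompact_iff_compactSpace.mp (isCompact_sphere _ _)
  -- geometry setup
  obtain ⟨δ₀, hδ₀, hδ₀sub⟩ :=
    (isCompact_closedBall x R).exists_cthickening_subset_open hDopen hRD
  set ε := δ₀ / 2 with hεdef
  have hεpos : 0 < ε := by positivity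
  have hKD : closedBall x (R + 2*ε) ⊆ D := by
    have h1 : cthickening δ₀ (closedBall x R) = closedBall x (δ₀ + R) :=
      cthickening_closedBall hδ₀.le hR.le x
    have h2 : R + 2*ε = δ₀ + R := by rw [hεdef]; ring
    rw [h2, ← h1]; exact hδ₀sub
  obtain ⟨δ₁, hδ₁, hδ₁V⟩ := Metric.isOpen_iff.1 hVopen x hx
  set δ' := min ε δ₁ with hδ'def
  have hδ'pos : 0 < δ' := lt_min hεpos hδ₁
  have hδ'ε : δ' ≤ ε := min_le_left _ _
  have hδ'V : ball x δ' ⊆ V := (ball_subset_ball (min_le_right _ _)).trans hδ₁V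
  set K := closedBall x (R + 2*ε) with hKdef
  have hKcl : IsClosed K := Metric.isClosed_closedBall
  -- extension H of g
  obtain ⟨G, hG⟩ := ContinuousMap.exists_restrict_eq (Y := ℝ) hKcl
    ⟨fun y : K => g y, (hgcont.mono hKD).restrict⟩
  have hGK : ∀ y ∈ K, G y = g y := by
    intro y hy
    have := congrFun (congrArg ContinuousMap.toFun hG) ⟨y, hy⟩
    simpa using this
  set c : (EuclideanSpace ℝ (Fin N)) → ℝ :=
    fun y => max 0 (min 1 (R + 2*ε + 1 - dist y x)) with hcdef
  have hccont : Continuous c :=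
    continuous_const.max
      (continuous_const.min (continuous_const.sub (continuous_id.dist continuous_const)))
  set H : (EuclideanSpace ℝ (Fin N)) → ℝ := fun y => c y * G y with hHdef
  have hHcont : Continuous H := hccont.mul G.continuous
  have hHsupp : HasCompactSupport H := by
    refine HasCompactSupport.intro (isCompact_closedBall x (R + 2*ε + 1)) fun y hy => ?_
    have hd : R + 2*ε + 1 < dist y x := by
      by_contra hcon
      exact hy (mem_closedBall.2 (not_lt.1 hcon))
    have hc0 : c y = 0 := by
      have h1 : min 1 (R + 2*ε + 1 - dist y x) ≤ 0 :=
        le_trans (min_le_right _ _) (by linarith)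
      simp only [hcdef]
      exact max_eq_left h1
    simp [hHdef, hc0]
  have hHK : ∀ y ∈ K, H y = g y := by
    intro y hy
    have hdy : dist y x ≤ R + 2*ε := mem_closedBall.1 hy
    have hc1 : c y = 1 := by
      have h1 : min 1 (R + 2*ε + 1 - dist y x) = 1 := min_eq_left (by linarith)
      simp only [hcdef, h1]
      exact max_eq_right zero_le_one
    simp [hHdef, hc1, hGK y hy]
  obtain ⟨y₀, hy₀⟩ :=
    (hHcont.norm).exists_forall_ge_of_hasCompactSupport hHsupp.norm
  set CH := ‖H y₀‖ with hCHdef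
  have hCH : ∀ y, |H y| ≤ CH := hy₀
  -- vanishing spherical means of H near x
  have hSH : ∀ v ∈ ball x δ', ∀ r : ℝ, 0 < r → r ≤ R + ε →
      (∫ ξ : sphere (0:E) 1, H (v + r • (ξ:E)) ∂(volume : Measure E).toSphere) = 0 := by
    intro v hv r hr hrb
    have hdvx : dist v x < δ' := mem_ball.1 hv
    have hsub : closedBall v r ⊆ K := by
      intro z hz
      have h3 : dist z x ≤ dist z v + dist v x := dist_triangle z v x
      have hz' : dist z v ≤ r := mem_closedBall.1 hz
      refine mem_closedBall.2 ?_
      have hde : δ' ≤ ε := hδ'ε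
      linarith
    have hmem : ∀ ξ : sphere (0:E) 1, v + r • (ξ:E) ∈ K := by
      intro ξ
      refine hsub ?_
      rw [mem_closedBall, dist_eq_norm, add_sub_cancel_left]
      exact le_of_eq (norm_sphere_smul hr ξ)
    have h0 := hg v (hδ'V hv) r hr (hsub.trans hKD)
    rw [← h0]
    exact integral_congr_ae (Eventually.of_forall fun ξ => hHK _ (hmem ξ))
  -- the coordinate-weighted spherical integral
  set A : ℝ → ℝ :=
    fun r => ∫ ξ : sphere (0:E) 1, H (x + r • (ξ:E)) * (ξ:E) i
      ∂(volume : Measure E).toSphere with hAdef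
  have hcoord : ∀ z : E, |z i| ≤ ‖z‖ := by
    intro z
    have h4 := abs_real_inner_le_norm z (EuclideanSpace.single i (1:ℝ))
    rw [EuclideanSpace.inner_single_right, EuclideanSpace.norm_single] at h4
    simpa using h4
  have hAbound : ∀ (r : ℝ) (ξ : sphere (0:E) 1), ‖H (x + r • (ξ:E)) * (ξ:E) i‖ ≤ CH := by
    intro r ξ
    have h1 : |(ξ:E) i| ≤ 1 := by
      have := hcoord (ξ:E)
      rwa [mem_sphere_zero_iff_norm.1 ξ.2] at this
    rw [Real.norm_eq_abs, abs_mul]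
    calc |H (x + r • (ξ:E))| * |(ξ:E) i| ≤ CH * 1 :=
          mul_le_mul (hCH _) h1 (abs_nonneg _)
            (le_trans (abs_nonneg (H (x + r • (ξ:E)))) (hCH (x + r • (ξ:E))))
      _ = CH := mul_one _
  have hAcont : Continuous A := by
    refine continuous_of_dominated ?_ (fun r => Eventually.of_forall (hAbound r))
      (integrable_const _) ?_
    · intro r
      exact ((hHcont.comp (continuous_const.add
        (by fun_prop : Continuous fun ξ : sphere (0:E) 1 => r • (ξ:E)))).mul
        ((by fun_prop : Continuous fun z : E => z i).comp continuous_subtype_val)).aestronglyMeasurable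
    · exact Eventually.of_forall fun ξ =>
        ((hHcont.comp (continuous_const.add
          (continuous_id.smul continuous_const))).mul continuous_const)
  set e : EuclideanSpace ℝ (Fin N) := EuclideanSpace.single i (1:ℝ) with hedef
  have hnorm_sub : ∀ (z : E) (s : ℝ),
      ‖z - s • e‖^2 = ‖z‖^2 - 2*(z i)*s + s^2 := by
    intro z s
    rw [norm_sub_sq_real]
    have h1 : inner ℝ z (s • e) = s * (z i) := by
      rw [real_inner_smul_right, hedef, EuclideanSpace.inner_single_right]
      simp [mul_comm]
    have h2 : ‖s • e‖^2 = s^2 := by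
      rw [norm_smul, hedef, EuclideanSpace.norm_single]
      simp [mul_pow, sq_abs]
    rw [h1, h2]
    ring
  -- the main bump estimate
  have hWmain : ∀ ρ : ℝ, 0 < ρ → ρ ≤ (R+ε)^2 - R^2 →
      ∀ ψ : ContDiffBump ((R:ℝ)^2), ψ.rOut = ρ →
      (∫ r in Ioi (0:ℝ), (2 * r^N * A r) * ψ (r^2)) = 0 := by
    intro ρ hρ hρb ψ hψρ
    set χ : ℝ → ℝ := fun u => ∫ s in u..(R^2 + ρ), ψ s with hχdef
    have hχ' : ∀ u, HasDerivAt χ (-ψ u) u := fun u =>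
      intervalIntegral.integral_hasDerivAt_left
        (ψ.continuous.intervalIntegrable _ _)
        (ψ.continuous.stronglyMeasurableAtFilter _ _)
        ψ.continuous.continuousAt
    have hχcont : Continuous χ := by
      rw [continuous_iff_continuousAt]
      exact fun u => (hχ' u).continuousAt
    have hψ0 : ∀ u : ℝ, R^2 + ρ ≤ u → ψ u = 0 := by
      intro u hu
      have hns : u ∉ support (ψ : ℝ → ℝ) := by
        rw [ψ.support_eq, hψρ]
        intro hmem
        rw [mem_ball, Real.dist_eq, abs_of_nonneg (by nlinarith)] at hmem
        linarith
      exact notMem_support.1 hns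
    have hχ0 : ∀ u : ℝ, R^2 + ρ ≤ u → χ u = 0 := by
      intro u hu
      simp only [hχdef]
      rw [intervalIntegral.integral_symm,
        intervalIntegral.integral_congr (g := fun _ => (0:ℝ))
          (fun s hs => hψ0 s (by
            rcases mem_uIcc.1 hs with h | h
            · exact h.1
            · linarith [h.1, h.2]))]
      simp
    set F : ℝ → (EuclideanSpace ℝ (Fin N)) → ℝ :=
      fun s y => H y * χ (‖y - (x + s • e)‖^2) with hFdef
    set Φ : ℝ → ℝ := fun s => ∫ y : E, F s y with hΦdef
    have hFcont : ∀ s, Continuous (F s) := fun s =>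
      hHcont.mul (hχcont.comp (((continuous_id.sub continuous_const).norm).pow 2))
    have hFsupp : ∀ s, HasCompactSupport (F s) := fun s => hHsupp.mul_right
    have hFint : ∀ s, Integrable (F s) volume := fun s =>
      (hFcont s).integrable_of_hasCompactSupport (hFsupp s)
    have hΦ0 : ∀ s : ℝ, |s| < δ' → Φ s = 0 := by
      intro s hs
      set v := x + s • e with hvdef
      have hv : v ∈ ball x δ' := by
        rw [mem_ball, dist_eq_norm, hvdef, add_sub_cancel_left, hedef, norm_smul,
          EuclideanSpace.norm_single]
        simpa using hs
      have htrans : Φ s = ∫ z : E, H (v + z) * χ (‖z‖^2) := by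
        have h := integral_add_left_eq_self (μ := (volume : Measure E))
          (fun y => H y * χ (‖y - v‖^2)) v
        simp only [add_sub_cancel_left] at h
        exact h.symm
      have hint2 : Integrable (fun z : E => H (v + z) * χ (‖z‖^2)) volume := by
        refine Continuous.integrable_of_hasCompactSupport ?_ ?_
        · exact (hHcont.comp (continuous_const.add continuous_id)).mul
            (hχcont.comp (continuous_norm.pow 2))
        · exact ((hHsupp.comp_homeomorph (Homeomorph.addLeft v))).mul_right
      rw [htrans, polar_integral hN _ hint2]
      rw [setIntegral_congr_fun (g := fun _ => (0:ℝ)) measurableSet_Ioi ?_]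
      · simp
      intro r hr
      have hr' : (0:ℝ) < r := hr
      beta_reduce
      simp only [norm_sphere_smul hr']
      rcases le_or_gt r (R + ε) with hrb | hrb
      · rw [integral_mul_const, hSH v hv r hr' hrb, zero_mul, smul_zero]
      · have hχr : χ (r^2) = 0 := by
          refine hχ0 _ ?_
          nlinarith
        rw [hχr]
        simp
    -- derivative of Φ at 0
    set F' : (EuclideanSpace ℝ (Fin N)) → ℝ :=
      fun y => H y * (ψ (‖y - x‖^2) * (2 * ((y - x) i))) with hF'def
    have hFderiv : ∀ (y : E) (s : ℝ), HasDerivAt (fun t => F t y)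
        (H y * (-ψ (‖y - x‖^2 - 2*((y - x) i)*s + s^2) * (-2*((y - x) i) + 2*s))) s := by
      intro y s
      have hueq : ∀ t : ℝ, ‖y - (x + t • e)‖^2 = ‖y - x‖^2 - 2*((y - x) i)*t + t^2 := by
        intro t
        rw [sub_add_eq_sub_sub, hnorm_sub]
      have hu : HasDerivAt (fun t : ℝ => ‖y - x‖^2 - 2*((y - x) i)*t + t^2)
          (-2*((y - x) i) + 2*s) s := by
        have h1 : HasDerivAt (fun t : ℝ => ‖y - x‖^2 - 2*((y - x) i)*t + t^2)
            (0 - 2*((y - x) i)*1 + (2:ℕ)*s^(2-1)) s :=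
          ((hasDerivAt_const s _).sub ((hasDerivAt_id s).const_mul _)).add
            (hasDerivAt_pow 2 s)
        convert h1 using 1
        norm_num
      have h2 : HasDerivAt (fun t => χ (‖y - x‖^2 - 2*((y - x) i)*t + t^2))
          (-ψ (‖y - x‖^2 - 2*((y - x) i)*s + s^2) * (-2*((y - x) i) + 2*s)) s :=
        (hχ' _).comp s hu
      have h3 := h2.const_mul (H y)
      refine HasDerivAt.congr_of_eventuallyEq h3 ?_
      exact Eventually.of_forall fun t => by
        simp only [hFdef]
        rw [hueq t]
    set bigbound : (EuclideanSpace ℝ (Fin N)) → ℝ :=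
      fun y => |H y| * (2*‖y - x‖ + 2) with hbbdef
    have hbigint : Integrable bigbound volume := by
      refine Continuous.integrable_of_hasCompactSupport ?_ ?_
      · exact hHcont.abs.mul (by fun_prop)
      · exact (hHsupp.abs).mul_right
    have hlip : ∀ y : E, LipschitzOnWith (Real.nnabs (bigbound y))
        (fun t => F t y) (ball (0:ℝ) 1) := by
      intro y
      refine (convex_ball (0:ℝ) 1).lipschitzOnWith_of_nnnorm_hasDerivWithin_le
        (f' := fun s => H y * (-ψ (‖y - x‖^2 - 2*((y - x) i)*s + s^2) * (-2*((y - x) i) + 2*s)))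
        (fun s _ => (hFderiv y s).hasDerivWithinAt) ?_
      intro s hs
      have hsabs : |s| < 1 := by
        rw [mem_ball, dist_zero_right, Real.norm_eq_abs] at hs
        exact hs
      have hpsb : |ψ (‖y - x‖^2 - 2*((y - x) i)*s + s^2)| ≤ 1 := by
        rw [abs_of_nonneg ψ.nonneg]
        exact ψ.le_one
      have hwb : |(y - x) i| ≤ ‖y - x‖ := hcoord _
      have h4 : |(-2*((y - x) i) + 2*s)| ≤ 2*‖y-x‖ + 2 := by
        rcases abs_cases (-2*((y - x) i) + 2*s) with ⟨he, _⟩ | ⟨he, _⟩ <;>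
        rcases abs_cases ((y - x) i) with ⟨ha, _⟩ | ⟨ha, _⟩ <;>
        rcases abs_cases s with ⟨hb, _⟩ | ⟨hb, _⟩ <;>
        nlinarith [hwb, hsabs]
      have hstep : |H y * (-ψ (‖y - x‖^2 - 2*((y - x) i)*s + s^2) * (-2*((y - x) i) + 2*s))|
          ≤ bigbound y := by
        have e1 : |H y * (-ψ (‖y - x‖^2 - 2*((y - x) i)*s + s^2) * (-2*((y - x) i) + 2*s))|
            = |H y| * (|ψ (‖y - x‖^2 - 2*((y - x) i)*s + s^2)| * |(-2*((y - x) i) + 2*s)|) := by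
          have e0 : H y * (-ψ (‖y - x‖^2 - 2*((y - x) i)*s + s^2) * (-2*((y - x) i) + 2*s))
              = -(H y * (ψ (‖y - x‖^2 - 2*((y - x) i)*s + s^2) * (-2*((y - x) i) + 2*s))) := by
            ring
          rw [e0, abs_neg, abs_mul (H y),
            abs_mul (ψ (‖y - x‖^2 - 2*((y - x) i)*s + s^2)) (-2*((y - x) i) + 2*s)]
        rw [e1]
        calc |H y| * (|ψ (‖y - x‖^2 - 2*((y - x) i)*s + s^2)| * |(-2*((y - x) i) + 2*s)|)
            ≤ |H y| * (1 * (2*‖y-x‖ + 2)) := by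
              refine mul_le_mul_of_nonneg_left ?_ (abs_nonneg _)
              exact mul_le_mul hpsb h4 (abs_nonneg _) (by norm_num)
          _ = bigbound y := by rw [hbbdef]; ring
      rw [← NNReal.coe_le_coe, coe_nnnorm, Real.norm_eq_abs, Real.coe_nnabs]
      exact hstep.trans (le_abs_self _)
    have hF'cont : Continuous F' := by
      refine hHcont.mul (Continuous.mul ?_ ?_)
      · exact ψ.continuous.comp (((continuous_id.sub continuous_const).norm).pow 2)
      · exact continuous_const.mul
          ((by fun_prop : Continuous fun z : E => z i).comp (continuous_id.sub continuous_const))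
    have hae : ∀ y : E, HasDerivAt (fun t => F t y) (F' y) 0 := by
      intro y
      have h := hFderiv y 0
      have harg : ‖y - x‖^2 - 2*((y - x) i)*0 + 0^2 = ‖y - x‖^2 := by ring
      rw [harg] at h
      convert h using 1
      simp only [hF'def]
      ring
    obtain ⟨hF'int, hΦder⟩ := hasDerivAt_integral_of_dominated_loc_of_lip (Metric.ball_mem_nhds (0:ℝ) one_pos)
      (Eventually.of_forall fun s => (hFcont s).aestronglyMeasurable)
      (hFint 0) hF'cont.aestronglyMeasurable
      (Eventually.of_forall hlip) hbigint
      (Eventually.of_forall hae)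
    have hΦder0 : HasDerivAt Φ 0 0 := by
      have hev : Φ =ᶠ[nhds (0:ℝ)] fun _ => 0 := by
        filter_upwards [Metric.ball_mem_nhds (0:ℝ) hδ'pos] with s hs
        exact hΦ0 s (by rwa [mem_ball, dist_zero_right, Real.norm_eq_abs] at hs)
      exact (hasDerivAt_const (0:ℝ) (0:ℝ)).congr_of_eventuallyEq hev
    have hintF'0 : (∫ y : E, F' y) = 0 := by
      have hΦder' : HasDerivAt Φ (∫ y : E, F' y) 0 := hΦder
      exact hΦder'.unique hΦder0
    have htrans2 : (∫ y : E, F' y) = ∫ z : E, H (x + z) * (ψ (‖z‖^2) * (2 * (z i))) := by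
      rw [← integral_add_left_eq_self (μ := (volume : Measure E)) F' x]
      refine integral_congr_ae (Eventually.of_forall fun z => ?_)
      simp only [hF'def]
      rw [add_sub_cancel_left]
    have hint3 : Integrable (fun z : E => H (x + z) * (ψ (‖z‖^2) * (2 * (z i)))) volume := by
      refine Continuous.integrable_of_hasCompactSupport ?_ ?_
      · exact (hHcont.comp (continuous_const.add continuous_id)).mul
          ((ψ.continuous.comp (continuous_norm.pow 2)).mul
            (continuous_const.mul (by fun_prop : Continuous fun z : E => z i)))
      · exact ((hHsupp.comp_homeomorph (Homeomorph.addLeft x))).mul_right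
    have hpolar2 := polar_integral hN _ hint3
    rw [← htrans2, hintF'0] at hpolar2
    refine Eq.trans ?_ hpolar2.symm
    refine setIntegral_congr_fun measurableSet_Ioi fun r hr => ?_
    have hr' : (0:ℝ) < r := hr
    beta_reduce
    have hinner2 : (∫ ξ : sphere (0:E) 1,
        H (x + r • (ξ:E)) * (ψ (‖r • (ξ:E)‖^2) * (2 * ((r • (ξ:E)) i)))
        ∂(volume : Measure E).toSphere)
        = (2 * r * ψ (r^2)) * A r := by
      simp only [hAdef]
      rw [← integral_const_mul]
      refine integral_congr_ae (Eventually.of_forall fun ξ => ?_)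
      have hsm : (r • (ξ:E)) i = r * (ξ:E) i := rfl
      simp only [norm_sphere_smul hr', hsm]
      ring
    rw [hinner2, smul_eq_mul]
    have hpow : r^(N-1) * r = r^N := by
      rw [← pow_succ, Nat.sub_add_cancel hN]
    rw [← hpow]
    ring
  -- conclude A R = 0
  set W : ℝ → ℝ := fun r => 2 * r^N * A r with hWdef
  have hWcont : Continuous W := (continuous_const.mul (continuous_pow N)).mul hAcont
  have hWR : W R = 0 := by
    by_contra hne
    have hpos : 0 < |W R| := abs_pos.2 hne
    set η := |W R| / 2 with hηdef
    have hη : 0 < η := by positivity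
    obtain ⟨τ, hτ, hτc⟩ := Metric.continuousAt_iff.1 hWcont.continuousAt η hη
    set ρ := min (R * τ) ((R+ε)^2 - R^2) with hρdef
    have hρpos : 0 < ρ := lt_min (by positivity) (by nlinarith)
    have hρb : ρ ≤ (R+ε)^2 - R^2 := min_le_right _ _
    have hρRτ : ρ ≤ R * τ := min_le_left _ _
    set ψ : ContDiffBump ((R:ℝ)^2) := ⟨ρ/2, ρ, by positivity, by linarith⟩ with hψdef
    have hint0 := hWmain ρ hρpos hρb ψ rfl
    have hsuppρ : ∀ r : ℝ, ψ (r^2) ≠ 0 → |r^2 - R^2| < ρ := by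
      intro r hrne
      have hmem : r^2 ∈ support (ψ : ℝ → ℝ) := mem_support.2 hrne
      rw [ψ.support_eq] at hmem
      have : dist (r^2) (R^2) < ψ.rOut := mem_ball.1 hmem
      rwa [Real.dist_eq] at this
    have hcs : HasCompactSupport (fun r : ℝ => ψ (r^2)) := by
      refine HasCompactSupport.intro (isCompact_Icc (a := -(R+ρ+1)) (b := R+ρ+1))
        fun r hr => ?_
      by_contra hne2
      have h1 := hsuppρ r hne2
      have h2 : R + ρ + 1 < |r| := by
        rcases abs_cases r with ⟨he, _⟩ | ⟨he, _⟩
        · rw [he]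
          by_contra hcon
          exact hr ⟨by linarith [abs_nonneg r, le_abs_self r, neg_abs_le r], by
            linarith [not_lt.1 hcon, le_abs_self r]⟩
        · rw [he]
          by_contra hcon
          push_neg at hcon
          exact hr ⟨by linarith [neg_abs_le r], by linarith [le_abs_self r, abs_nonneg r]⟩
      have h3 : (R+ρ+1)^2 ≤ r^2 := by nlinarith [sq_abs r, abs_nonneg r]
      have h4 : r^2 - R^2 ≥ ρ := by nlinarith
      have h5 : |r^2 - R^2| ≥ ρ := le_trans h4 (le_abs_self _)
      linarith
    have hψcont2 : Continuous fun r : ℝ => ψ (r^2) := ψ.continuous.comp (continuous_pow 2)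
    have hint1 : Integrable (fun r : ℝ => ψ (r^2)) (volume.restrict (Ioi 0)) :=
      (hψcont2.integrable_of_hasCompactSupport hcs).restrict
    have hint2 : Integrable (fun r : ℝ => W r * ψ (r^2)) (volume.restrict (Ioi 0)) :=
      ((hWcont.mul hψcont2).integrable_of_hasCompactSupport hcs.mul_left).restrict
    set J := ∫ r in Ioi (0:ℝ), ψ (r^2) with hJdef
    have hJpos : 0 < J := by
      refine (integral_pos_iff_support_of_nonneg (fun r => ψ.nonneg) hint1).2 ?_
      set κ := min 1 (ρ / (2*R+1)) with hκdef
      have hκpos : 0 < κ := lt_min one_pos (by positivity)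
      have hsub2 : Ioo R (R+κ) ⊆ support fun r : ℝ => ψ (r^2) := by
        intro r hrmem
        have h5 : R < r := hrmem.1
        have h6 : r < R + κ := hrmem.2
        have hκ1 : κ ≤ 1 := min_le_left _ _
        have hκ2 : κ * (2*R+1) ≤ ρ := by
          have := min_le_right 1 (ρ / (2*R+1))
          calc κ * (2*R+1) ≤ (ρ / (2*R+1)) * (2*R+1) := by
                refine mul_le_mul_of_nonneg_right ?_ (by linarith)
                exact min_le_right _ _
            _ = ρ := by field_simp
        have h7 : r^2 - R^2 < ρ := by nlinarith
        have h8 : 0 < r^2 - R^2 := by nlinarith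
        refine mem_support.2 (ne_of_gt (ψ.pos_of_mem_ball ?_))
        rw [mem_ball, Real.dist_eq, abs_of_pos h8]
        exact h7
      calc (0:ℝ≥0∞) < (volume.restrict (Ioi 0)) (Ioo R (R+κ)) := by
            rw [Measure.restrict_apply' measurableSet_Ioi]
            have hinter : Ioo R (R+κ) ∩ Ioi 0 = Ioo R (R+κ) :=
              inter_eq_left.2 (fun r h => lt_trans hR h.1)
            rw [hinter, Real.volume_Ioo]
            rw [ENNReal.ofReal_pos]
            linarith
        _ ≤ (volume.restrict (Ioi 0)) (support fun r : ℝ => ψ (r^2)) :=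
            measure_mono hsub2
    have hdiff : W R * J = ∫ r in Ioi (0:ℝ), (W R - W r) * ψ (r^2) := by
      have h9 : (∫ r in Ioi (0:ℝ), (W R - W r) * ψ (r^2))
          = (∫ r in Ioi (0:ℝ), W R * ψ (r^2)) - ∫ r in Ioi (0:ℝ), W r * ψ (r^2) := by
        rw [← integral_sub (hint1.const_mul (W R)) hint2]
        refine integral_congr_ae (Eventually.of_forall fun r => ?_)
        ring
      rw [h9, hint0, sub_zero, integral_const_mul]
    have hb2 : |W R * J| ≤ η * J := by
      rw [hdiff]
      have hb3 : ‖∫ r in Ioi (0:ℝ), (W R - W r) * ψ (r^2)‖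
          ≤ ∫ r in Ioi (0:ℝ), η * ψ (r^2) := by
        refine norm_integral_le_of_norm_le (hint1.const_mul η) ?_
        filter_upwards [ae_restrict_mem measurableSet_Ioi] with r hrmem
        by_cases hz : ψ (r^2) = 0
        · rw [hz]
          simp
        · have h9 := hsuppρ r hz
          have hrpos : (0:ℝ) < r := hrmem
          have h10 : |r - R| < τ := by
            have habs : |r - R| * (r + R) = |r^2 - R^2| := by
              rw [← abs_of_pos (show (0:ℝ) < r + R by linarith), ← abs_mul]
              congr 1
              ring
            nlinarith [abs_nonneg (r - R), abs_nonneg (r^2 - R^2)]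
          have h11 : |W r - W R| < η := by
            have := hτc (show dist r R < τ by rwa [Real.dist_eq])
            rwa [Real.dist_eq] at this
          rw [Real.norm_eq_abs, abs_mul, abs_of_nonneg ψ.nonneg]
          have h12 : |W R - W r| ≤ η := by
            rw [abs_sub_comm]
            linarith
          exact mul_le_mul_of_nonneg_right h12 ψ.nonneg
      rw [Real.norm_eq_abs] at hb3
      rw [integral_const_mul] at hb3
      exact hb3.trans (le_of_eq rfl)
    have hWRle : |W R| ≤ η := by
      rw [abs_mul, abs_of_pos hJpos] at hb2
      exact le_of_mul_le_mul_right hb2 hJpos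
    rw [hηdef] at hWRle
    linarith
  have hAR : A R = 0 := by
    have h13 : 2 * R^N * A R = 0 := hWR
    have hRN : (2:ℝ) * R^N ≠ 0 := by
      refine mul_ne_zero two_ne_zero (pow_ne_zero _ (ne_of_gt hR))
    rcases mul_eq_zero.1 h13 with h | h
    · exact absurd h hRN
    · exact h
  -- final computation
  have hSR := hSH x (mem_ball_self hδ'pos) R hR (by linarith)
  have hptwise : ∀ ξ : sphere (0:E) 1, g (x + R • (ξ:E)) * ((x + R • (ξ:E)) i)
      = H (x + R • (ξ:E)) * x i + R * (H (x + R • (ξ:E)) * (ξ:E) i) := by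
    intro ξ
    have hmem : x + R • (ξ:E) ∈ K := by
      rw [hKdef, mem_closedBall, dist_eq_norm, add_sub_cancel_left,
        norm_sphere_smul hR ξ]
      linarith
    rw [← hHK _ hmem]
    have hcoordeq : (x + R • (ξ:E)) i = x i + R * (ξ:E) i := by
      simp [PiLp.add_apply, PiLp.smul_apply, smul_eq_mul]
    rw [hcoordeq]
    ring
  rw [integral_congr_ae (Eventually.of_forall hptwise)]
  have hintA : Integrable (fun ξ : sphere (0:E) 1 => H (x + R • (ξ:E)) * x i)
      (volume : Measure E).toSphere := by
    refine (integrable_const (CH * |x i|)).mono'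
      (Continuous.aestronglyMeasurable ?_) (Eventually.of_forall fun ξ => ?_)
    · exact (hHcont.comp (continuous_const.add
        (by fun_prop : Continuous fun ξ : sphere (0:E) 1 => R • (ξ:E)))).mul continuous_const
    · rw [Real.norm_eq_abs, abs_mul]
      exact mul_le_mul_of_nonneg_right (hCH _) (abs_nonneg _)
  have hintB : Integrable (fun ξ : sphere (0:E) 1 => R * (H (x + R • (ξ:E)) * (ξ:E) i))
      (volume : Measure E).toSphere := by
    refine (integrable_const (|R| * CH)).mono'
      (Continuous.aestronglyMeasurable ?_) (Eventually.of_forall fun ξ => ?_)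
    · exact continuous_const.mul ((hHcont.comp (continuous_const.add
        (by fun_prop : Continuous fun ξ : sphere (0:E) 1 => R • (ξ:E)))).mul
        ((by fun_prop : Continuous fun z : E => z i).comp continuous_subtype_val))
    · rw [Real.norm_eq_abs, abs_mul]
      exact mul_le_mul_of_nonneg_left (hAbound R ξ) (abs_nonneg _)
  rw [integral_add hintA hintB, integral_mul_const, hSR, integral_const_mul]
  have hAR' : (∫ ξ : sphere (0:E) 1, H (x + R • (ξ:E)) * (ξ:E) i
      ∂(volume : Measure E).toSphere) = 0 := hAR
  rw [hAR']
  simp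

lemma nonempty_sphere (hN : 1 ≤ N) : Nonempty (sphere (0:E) 1) := by
  refine ⟨⟨EuclideanSpace.single ⟨0, hN⟩ 1, ?_⟩⟩
  rw [mem_sphere_zero_iff_norm, EuclideanSpace.norm_single]
  norm_num

lemma integrable_sphere_fun (hN : 1 ≤ N) (f : sphere (0:E) 1 → ℝ) (hf : Continuous f) :
    Integrable f ((volume : Measure E).toSphere) := by
  haveI : CompactSpace (sphere (0:E) 1) := isCompact_iff_compactSpace.mp (isCompact_sphere _ _)
  haveI : Nonempty (sphere (0:E) 1) := nonempty_sphere hN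
  obtain ⟨ξ₀, -, hξ₀⟩ := isCompact_univ.exists_isMaxOn univ_nonempty hf.norm.continuousOn
  exact (integrable_const ‖f ξ₀‖).mono' hf.aestronglyMeasurable
    (Eventually.of_forall fun ξ => hξ₀ (mem_univ ξ))


/-- Inductive step in Zalcman's argument: if `h` has vanishing spherical means
around all points of a neighborhood `V`, then so does `h · P` for every
polynomial `P` on `ℝ^N`. -/
theorem stmt4 (N : ℕ) (hN : 2 ≤ N)
    (D : Set (EuclideanSpace ℝ (Fin N))) (hDopen : IsOpen D)
    (h : EuclideanSpace ℝ (Fin N) → ℝ) (hcont : ContinuousOn h D)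
    (x₀ : EuclideanSpace ℝ (Fin N)) (hx₀ : x₀ ∈ D)
    (V : Set (EuclideanSpace ℝ (Fin N))) (hVopen : IsOpen V) (hx₀V : x₀ ∈ V) (hVD : V ⊆ D)
    (hmean : ∀ x ∈ V, ∀ R : ℝ, 0 < R → Metric.closedBall x R ⊆ D →
      (∫ ξ : Metric.sphere (0 : EuclideanSpace ℝ (Fin N)) 1,
        h (x + R • (ξ : EuclideanSpace ℝ (Fin N)))
        ∂(volume : Measure (EuclideanSpace ℝ (Fin N))).toSphere) = 0) :
    ∀ P : MvPolynomial (Fin N) ℝ, ∀ x ∈ V, ∀ R : ℝ, 0 < R → Metric.closedBall x R ⊆ D →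
      (∫ ξ : Metric.sphere (0 : EuclideanSpace ℝ (Fin N)) 1,
        h (x + R • (ξ : EuclideanSpace ℝ (Fin N))) *
          MvPolynomial.eval (fun i => (x + R • (ξ : EuclideanSpace ℝ (Fin N))) i) P
        ∂(volume : Measure (EuclideanSpace ℝ (Fin N))).toSphere) = 0 := by
  have hN1 : 1 ≤ N := by omega
  have main : ∀ P : MvPolynomial (Fin N) ℝ,
      ContinuousOn (fun y : EuclideanSpace ℝ (Fin N) =>
        h y * MvPolynomial.eval (fun j => y j) P) D ∧
      ∀ x ∈ V, ∀ R : ℝ, 0 < R → Metric.closedBall x R ⊆ D →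
        (∫ ξ : Metric.sphere (0 : EuclideanSpace ℝ (Fin N)) 1,
          h (x + R • (ξ : EuclideanSpace ℝ (Fin N))) *
            MvPolynomial.eval (fun j => (x + R • (ξ : EuclideanSpace ℝ (Fin N))) j) P
          ∂(volume : Measure (EuclideanSpace ℝ (Fin N))).toSphere) = 0 := by
    intro P
    induction P using MvPolynomial.induction_on with
    | C a =>
      constructor
      · refine (hcont.mul (continuousOn_const (c := a))).congr fun y hy => ?_
        simp [MvPolynomial.eval_C]
      · intro x hx R hR hRD
        have h0 := hmean x hx R hR hRD
        calc (∫ ξ : Metric.sphere (0 : EuclideanSpace ℝ (Fin N)) 1,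
              h (x + R • (ξ : EuclideanSpace ℝ (Fin N))) *
                MvPolynomial.eval (fun j => (x + R • (ξ : EuclideanSpace ℝ (Fin N))) j)
                  (MvPolynomial.C a)
              ∂(volume : Measure (EuclideanSpace ℝ (Fin N))).toSphere)
            = (∫ ξ : Metric.sphere (0 : EuclideanSpace ℝ (Fin N)) 1,
              h (x + R • (ξ : EuclideanSpace ℝ (Fin N))) * a
              ∂(volume : Measure (EuclideanSpace ℝ (Fin N))).toSphere) := by
              refine integral_congr_ae (Eventually.of_forall fun ξ => ?_)
              simp [MvPolynomial.eval_C]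
          _ = 0 := by rw [integral_mul_const, h0, zero_mul]
    | add p q hp hq =>
      constructor
      · refine (hp.1.add hq.1).congr fun y hy => ?_
        simp [MvPolynomial.eval_add]
        ring
      · intro x hx R hR hRD
        have hmap : Continuous (fun ξ : Metric.sphere (0 : EuclideanSpace ℝ (Fin N)) 1 =>
            x + R • (ξ : EuclideanSpace ℝ (Fin N))) :=
          by fun_prop
        have hmemD : ∀ ξ : Metric.sphere (0 : EuclideanSpace ℝ (Fin N)) 1,
            x + R • (ξ : EuclideanSpace ℝ (Fin N)) ∈ D := by
          intro ξ
          refine hRD ?_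
          rw [mem_closedBall, dist_eq_norm, add_sub_cancel_left]
          exact le_of_eq (norm_sphere_smul hR ξ)
        have hintp : Integrable (fun ξ : Metric.sphere (0 : EuclideanSpace ℝ (Fin N)) 1 =>
            h (x + R • (ξ : EuclideanSpace ℝ (Fin N))) *
              MvPolynomial.eval (fun j => (x + R • (ξ : EuclideanSpace ℝ (Fin N))) j) p)
            ((volume : Measure (EuclideanSpace ℝ (Fin N))).toSphere) :=
          integrable_sphere_fun hN1 _ (hp.1.comp_continuous hmap hmemD)
        have hintq : Integrable (fun ξ : Metric.sphere (0 : EuclideanSpace ℝ (Fin N)) 1 =>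
            h (x + R • (ξ : EuclideanSpace ℝ (Fin N))) *
              MvPolynomial.eval (fun j => (x + R • (ξ : EuclideanSpace ℝ (Fin N))) j) q)
            ((volume : Measure (EuclideanSpace ℝ (Fin N))).toSphere) :=
          integrable_sphere_fun hN1 _ (hq.1.comp_continuous hmap hmemD)
        have hsplit : (∫ ξ : Metric.sphere (0 : EuclideanSpace ℝ (Fin N)) 1,
            h (x + R • (ξ : EuclideanSpace ℝ (Fin N))) *
              MvPolynomial.eval (fun j => (x + R • (ξ : EuclideanSpace ℝ (Fin N))) j) (p + q)
            ∂(volume : Measure (EuclideanSpace ℝ (Fin N))).toSphere)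
            = (∫ ξ : Metric.sphere (0 : EuclideanSpace ℝ (Fin N)) 1,
              (h (x + R • (ξ : EuclideanSpace ℝ (Fin N))) *
                MvPolynomial.eval (fun j => (x + R • (ξ : EuclideanSpace ℝ (Fin N))) j) p +
               h (x + R • (ξ : EuclideanSpace ℝ (Fin N))) *
                MvPolynomial.eval (fun j => (x + R • (ξ : EuclideanSpace ℝ (Fin N))) j) q)
              ∂(volume : Measure (EuclideanSpace ℝ (Fin N))).toSphere) := by
          refine integral_congr_ae (Eventually.of_forall fun ξ => ?_)
          simp [MvPolynomial.eval_add]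
          ring
        rw [hsplit, integral_add hintp hintq, hp.2 x hx R hR hRD, hq.2 x hx R hR hRD,
          add_zero]
    | mul_X p j hp =>
      have hstep := key_step hN1 D hDopen V hVopen hVD
        (fun y => h y * MvPolynomial.eval (fun k => y k) p) hp.1 hp.2 j
      constructor
      · refine (hp.1.mul (by fun_prop : Continuous fun z : EuclideanSpace ℝ (Fin N) => z j).continuousOn).congr fun y hy => ?_
        simp [MvPolynomial.eval_mul, MvPolynomial.eval_X]
        ring
      · intro x hx R hR hRD
        have h0 := hstep x hx R hR hRD
        rw [← h0]
        refine integral_congr_ae (Eventually.of_forall fun ξ => ?_)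
        simp [MvPolynomial.eval_mul, MvPolynomial.eval_X]
        ring
  exact fun P x hx R hR hRD => (main P).2 x hx R hR hRD
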